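/- Let T be a finite tree (a finite connected acyclic combinatorial graph) with vertex set V, and let f : V → ℝ^d be any map, so that each edge {u,v} of T is realized as the straight segment from f(u) to f(v). Let L = Σ_{edges {u,v} of T} ‖f(u) − f(v)‖ be the total length of the embedded tree. Then there exists a point z ∈ ℝ^d such that ‖f(v) − z‖ ≤ L/2 for every vertex v ∈ V; consequently the closed ball of radius L/2 centered at z contains every edge segment of the embedded tree. -/

import Mathlib

open Finset in
/-- Lift a walk whose support lies in `s` to a reachability statement in the induced graph. -/
lemma tree_ball_lift_reachable {V : Type*} (G : SimpleGraph V) (s : Set V) :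
    ∀ {u v : V} (p : G.Walk u v) (hp : ∀ w ∈ p.support, w ∈ s),
      (G.induce s).Reachable ⟨u, hp u p.start_mem_support⟩ ⟨v, hp v p.end_mem_support⟩ := by
  intro u v p
  induction p with
  | nil => intro hp; exact SimpleGraph.Reachable.refl _
  | @cons a b c h q ih =>
    intro hp
    have ha : a ∈ s := hp a (SimpleGraph.Walk.start_mem_support _)
    have hq : ∀ w ∈ q.support, w ∈ s := by
      intro w hw
      exact hp w (by simp [SimpleGraph.Walk.support_cons, hw])
    have hadj : (G.induce s).Adj ⟨a, ha⟩ ⟨b, hq b q.start_mem_support⟩ := by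
      simpa using h
    exact hadj.reachable.trans (ih hq)

/-- From any vertex `v ≠ x`, where `x` is a leaf with unique neighbor `y`, there is a walk
from `v` to `y` avoiding `x`. -/
lemma tree_ball_walk_avoid {V : Type*} {G : SimpleGraph V} {x y : V}
    (hxy : G.Adj x y) (huniq : ∀ w, G.Adj x w → w = y)
    (hconn : G.Preconnected) {v : V} (hv : v ≠ x) :
    ∃ p : G.Walk v y, ∀ w ∈ p.support, w ≠ x := by
  classical
  obtain ⟨q0⟩ := hconn x v
  obtain ⟨q, hq⟩ := q0.toPath
  cases q with
  | nil => exact absurd rfl hv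
  | @cons _ b _ h q' =>
    have hb : b = y := huniq b h
    subst hb
    rw [SimpleGraph.Walk.cons_isPath_iff] at hq
    refine ⟨q'.reverse, ?_⟩
    intro w hw
    rw [SimpleGraph.Walk.support_reverse, List.mem_reverse] at hw
    intro hwx
    subst hwx
    exact hq.2 hw

/-- The key analytic step: moving the center of a ball of radius `A + ℓ` containing `p`
by at most `ℓ/2` towards `p`, we can get `p` within distance `A + ℓ/2`. -/
lemma tree_ball_extend {E : Type*} [NormedAddCommGroup E] [NormedSpace ℝ E]
    (z' p : E) (A ℓ : ℝ) (hA : 0 ≤ A) (hl : 0 ≤ ℓ) (hp : ‖p - z'‖ ≤ A + ℓ) :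
    ∃ z : E, ‖p - z‖ ≤ A + ℓ / 2 ∧ ‖z - z'‖ ≤ ℓ / 2 := by
  rcases eq_or_lt_of_le (norm_nonneg (p - z')) with h0 | h0
  · refine ⟨z', ?_, ?_⟩
    · rw [← h0]; linarith
    · simp only [sub_self, norm_zero]; linarith
  · set r : ℝ := ‖p - z'‖ with hr
    set c : ℝ := min (ℓ / 2) r with hc
    have hc0 : 0 ≤ c := le_min (by linarith) (by linarith [h0])
    have hcr : c ≤ r := min_le_right _ _
    refine ⟨z' + (c / r) • (p - z'), ?_, ?_⟩
    · have key : p - (z' + (c / r) • (p - z')) = (1 - c / r) • (p - z') := by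
        rw [sub_smul, one_smul]; abel
      have h1 : 0 ≤ 1 - c / r := by
        rw [sub_nonneg, div_le_one (by linarith [h0])]; exact hcr
      have : ‖p - (z' + (c / r) • (p - z'))‖ = (1 - c / r) * r := by
        rw [key, norm_smul, Real.norm_eq_abs, abs_of_nonneg h1, hr]
      rw [this]
      have hrc : (1 - c / r) * r = r - c := by
        field_simp
      rw [hrc]
      rcases min_cases (ℓ / 2) r with ⟨hceq, _⟩ | ⟨hceq, hlt⟩
      · rw [hc, hceq]; linarith
      · rw [hc, hceq]; linarith
    · have : ‖z' + (c / r) • (p - z') - z'‖ = c := by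
        rw [add_sub_cancel_left, norm_smul, Real.norm_eq_abs,
          abs_of_nonneg (by positivity), ← hr]
        field_simp
      rw [this]
      exact min_le_left _ _

open Classical Finset in
/-- Main induction: a tree on `n` vertices mapped to a normed space fits in a ball of radius
(total edge length)/2, i.e. (double-counted sum)/4. -/
lemma tree_ball_aux {E : Type*} [NormedAddCommGroup E] [NormedSpace ℝ E] :
    ∀ (n : ℕ) (V : Type u) [Fintype V] (G : SimpleGraph V), G.IsTree →
      Fintype.card V = n → ∀ f : V → E,
      ∃ z : E, ∀ v, ‖f v - z‖ ≤ (∑ u : V, ∑ v : V, if G.Adj u v then ‖f u - f v‖ else 0) / 4 := by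
  intro n
  induction n using Nat.strong_induction_on with
  | _ n IH =>
    intro V _ G hT hcard f
    classical
    have hne : Nonempty V := hT.isConnected.nonempty
    have hpos : 1 ≤ Fintype.card V := Fintype.card_pos_iff.mpr hne
    obtain ⟨v0⟩ := hne
    rcases eq_or_lt_of_le hpos with h1 | h2
    · -- single vertex
      have hsub : ∀ v : V, v = v0 := by
        intro v
        have := Fintype.card_le_one_iff.mp (le_of_eq h1.symm)
        exact this v v0
      refine ⟨f v0, ?_⟩
      intro v
      have hzero : (∑ u : V, ∑ v : V, if G.Adj u v then ‖f u - f v‖ else 0) = 0 := by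
        apply Finset.sum_eq_zero; intro u _
        apply Finset.sum_eq_zero; intro w _
        have : u = w := (hsub u).trans (hsub w).symm
        rw [if_neg (by subst this; exact G.irrefl)]
      rw [hzero, hsub v]
      simp
    · -- at least two vertices: find a leaf
      have hdegpos : ∀ v : V, 0 < G.degree v := by
        intro v
        obtain ⟨w, hw⟩ := Fintype.exists_ne_of_one_lt_card h2 v
        obtain ⟨p⟩ := hT.isConnected.preconnected v w
        rw [G.degree_pos_iff_exists_adj]
        cases p with
        | nil => exact absurd rfl hw
        | cons h q => exact ⟨_, h⟩
      have hE : G.edgeFinset.card + 1 = Fintype.card V := hT.card_edgeFinset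
      have hsumdeg : ∑ v : V, G.degree v = 2 * G.edgeFinset.card :=
        G.sum_degrees_eq_twice_card_edges
      have hleaf : ∃ x : V, G.degree x = 1 := by
        by_contra hcon
        push_neg at hcon
        have h2le : ∀ v : V, 2 ≤ G.degree v := by
          intro v
          have := hdegpos v
          have := hcon v
          omega
        have : 2 * Fintype.card V ≤ ∑ v : V, G.degree v := by
          calc 2 * Fintype.card V = ∑ _v : V, 2 := by
                simp [Finset.sum_const, mul_comm, Finset.card_univ]
            _ ≤ ∑ v : V, G.degree v := Finset.sum_le_sum (fun v _ => h2le v)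
        omega
      obtain ⟨x, hx⟩ := hleaf
      -- unique neighbor y
      obtain ⟨y, hy⟩ := Finset.card_eq_one.mp (by rw [← hx]; rfl)
      have hxy : G.Adj x y := by
        rw [← SimpleGraph.mem_neighborFinset, hy]; exact Finset.mem_singleton_self y
      have huniq : ∀ w, G.Adj x w → w = y := by
        intro w hw
        have : w ∈ G.neighborFinset x := (SimpleGraph.mem_neighborFinset _ _ _).mpr hw
        rw [hy] at this
        exact Finset.mem_singleton.mp this
      have hyx : y ≠ x := hxy.ne'
      -- the induced subgraph on V \ {x}
      set s : Set V := {w | w ≠ x} with hs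
      have hcards : Fintype.card s = n - 1 := by
        have : Fintype.card s = Fintype.card V - Fintype.card {w : V // w = x} :=
          Fintype.card_subtype_compl _
        rw [this, Fintype.card_subtype_eq, hcard]
      have hys : y ∈ s := hyx
      -- the induced graph is a tree
      have hT' : (G.induce s).IsTree := by
        have hne' : Nonempty s := ⟨⟨y, hys⟩⟩
        refine ⟨SimpleGraph.Connected.mk ?_, ?_⟩
        · intro a b
          obtain ⟨pa, hpa⟩ := tree_ball_walk_avoid hxy huniq hT.isConnected.preconnected
            (a.2 : (a : V) ≠ x)
          obtain ⟨pb, hpb⟩ := tree_ball_walk_avoid hxy huniq hT.isConnected.preconnected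
            (b.2 : (b : V) ≠ x)
          have ra := tree_ball_lift_reachable G s pa (fun w hw => hpa w hw)
          have rb := tree_ball_lift_reachable G s pb (fun w hw => hpb w hw)
          exact ra.trans rb.symm
        · intro v c hc
          have : (c.map ((SimpleGraph.Embedding.induce (G := G) s)).toHom).IsCycle :=
            (SimpleGraph.Walk.map_isCycle_iff_of_injective
              ((SimpleGraph.Embedding.induce (G := G) s)).injective).mpr hc
          exact hT.IsAcyclic _ this
      -- apply induction hypothesis
      have hn1 : n - 1 < n := by omega
      obtain ⟨z', hz'⟩ := IH (n - 1) hn1 s (G.induce s) hT' hcards (fun w => f w)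
      set F : V → V → ℝ := fun u v => if G.Adj u v then ‖f u - f v‖ else 0 with hF
      set ℓ : ℝ := ‖f x - f y‖ with hldef
      set S' : ℝ := ∑ u : s, ∑ v : s,
        if (G.induce s).Adj u v then ‖f u - f v‖ else 0 with hS'
      -- sum over the subtype equals sum over erase x
      have hsub_eq : S' = ∑ u ∈ Finset.univ.erase x, ∑ v ∈ Finset.univ.erase x, F u v := by
        rw [hS']
        have hmem : ∀ w : V, w ∈ Finset.univ.erase x ↔ w ∈ s := by
          intro w; simp [hs, Finset.mem_erase]
        rw [Finset.sum_subtype (Finset.univ.erase x) hmem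
          (fun u => ∑ v ∈ Finset.univ.erase x, F u v)]
        refine Finset.sum_congr rfl fun u _ => ?_
        rw [Finset.sum_subtype (Finset.univ.erase x) hmem (fun v => F (↑u) v)]
        rfl
      -- the row and column sums at x
      have hrow : ∑ v : V, F x v = ℓ := by
        have h1 : ∑ v : V, F x v = F x y :=
          Finset.sum_eq_single_of_mem y (Finset.mem_univ y) (fun w _ hwy => by
            simp only [hF]
            rw [if_neg (fun h => hwy (huniq w h))])
        rw [h1, hF, hldef]
        simp only
        rw [if_pos hxy]
      have hcol : ∑ u : V, F u x = ℓ := by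
        have h1 : ∑ u : V, F u x = F y x :=
          Finset.sum_eq_single_of_mem y (Finset.mem_univ y) (fun w _ hwy => by
            simp only [hF]
            rw [if_neg (fun h => hwy (huniq w h.symm))])
        rw [h1, hF, hldef]
        simp only
        rw [if_pos hxy.symm, norm_sub_rev]
      have hFxx : F x x = 0 := by rw [hF]; simp only; rw [if_neg (G.irrefl)]
      -- split the big sum
      have hsplit : (∑ u : V, ∑ v : V, F u v) = S' + 2 * ℓ := by
        have h1 : (∑ u : V, ∑ v : V, F u v)
            = (∑ u ∈ Finset.univ.erase x, ∑ v : V, F u v) + ∑ v : V, F x v := by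
          rw [Finset.sum_erase_add _ _ (Finset.mem_univ x)]
        have h2 : ∀ u : V, (∑ v : V, F u v)
            = (∑ v ∈ Finset.univ.erase x, F u v) + F u x := by
          intro u
          rw [Finset.sum_erase_add _ _ (Finset.mem_univ x)]
        have h3 : (∑ u ∈ Finset.univ.erase x, ∑ v : V, F u v)
            = (∑ u ∈ Finset.univ.erase x, ∑ v ∈ Finset.univ.erase x, F u v)
              + ∑ u ∈ Finset.univ.erase x, F u x := by
          rw [← Finset.sum_add_distrib]
          exact Finset.sum_congr rfl (fun u _ => h2 u)
        have h4 : (∑ u ∈ Finset.univ.erase x, F u x) = ℓ := by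
          have h5 := Finset.sum_erase_add Finset.univ (fun u => F u x) (Finset.mem_univ x)
          simp only [hFxx, add_zero] at h5
          rw [h5, hcol]
        rw [h1, h3, h4, hrow, hsub_eq]
        ring
      -- nonnegativity
      have hS'nonneg : 0 ≤ S' := by
        rw [hS']
        apply Finset.sum_nonneg; intro u _
        apply Finset.sum_nonneg; intro v _
        split <;> [exact norm_nonneg _; exact le_refl 0]
      have hlnonneg : 0 ≤ ℓ := norm_nonneg _
      -- distance from f x to z'
      have hfx : ‖f x - z'‖ ≤ S' / 4 + ℓ := by
        calc ‖f x - z'‖ ≤ ‖f x - f y‖ + ‖f y - z'‖ := by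
              have := norm_sub_le_norm_sub_add_norm_sub (f x) (f y) z'
              exact this
          _ ≤ ℓ + S' / 4 := by
              have := hz' ⟨y, hys⟩
              rw [hldef]
              exact add_le_add (le_refl _) this
          _ = S' / 4 + ℓ := by ring
      obtain ⟨z, hz1, hz2⟩ := tree_ball_extend z' (f x) (S' / 4) ℓ (by linarith) hlnonneg hfx
      refine ⟨z, ?_⟩
      intro v
      rw [show (∑ u : V, ∑ v : V, if G.Adj u v then ‖f u - f v‖ else 0) = S' + 2 * ℓ from hsplit]
      by_cases hvx : v = x
      · subst hvx
        calc ‖f v - z‖ ≤ S' / 4 + ℓ / 2 := hz1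
          _ = (S' + 2 * ℓ) / 4 := by ring
      · calc ‖f v - z‖ ≤ ‖f v - z'‖ + ‖z' - z‖ :=
              norm_sub_le_norm_sub_add_norm_sub (f v) z' z
          _ ≤ S' / 4 + ℓ / 2 := by
              have h1 := hz' ⟨v, hvx⟩
              have h2 : ‖z' - z‖ ≤ ℓ / 2 := by rw [norm_sub_rev]; exact hz2
              exact add_le_add h1 h2
          _ = (S' + 2 * ℓ) / 4 := by ring

open Classical in
/-- Any tree mapped into ℝ^d with straight edges of total length L is contained in a
closed ball of radius L/2. -/
theorem tree_in_ball_of_half_length (d : ℕ) (V : Type*) [Fintype V]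
    (G : SimpleGraph V) (hT : G.IsTree)
    (f : V → EuclideanSpace ℝ (Fin d))
    (L : ℝ)
    (hL : L = (∑ u : V, ∑ v : V, if G.Adj u v then ‖f u - f v‖ else 0) / 2) :
    ∃ z : EuclideanSpace ℝ (Fin d),
      (∀ v : V, ‖f v - z‖ ≤ L / 2) ∧
      (∀ u v : V, G.Adj u v →
        segment ℝ (f u) (f v) ⊆ Metric.closedBall z (L / 2)) := by
  obtain ⟨z, hz⟩ := tree_ball_aux (Fintype.card V) V G hT rfl f
  have hbound : ∀ v : V, ‖f v - z‖ ≤ L / 2 := by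
    intro v
    rw [hL]
    calc ‖f v - z‖ ≤ (∑ u : V, ∑ v : V, if G.Adj u v then ‖f u - f v‖ else 0) / 4 := hz v
      _ = (∑ u : V, ∑ v : V, if G.Adj u v then ‖f u - f v‖ else 0) / 2 / 2 := by ring
  refine ⟨z, hbound, ?_⟩
  intro u v _
  apply (convex_closedBall z (L / 2)).segment_subset
  · rw [Metric.mem_closedBall, dist_eq_norm]; exact hbound u
  · rw [Metric.mem_closedBall, dist_eq_norm]; exact hbound v
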